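/- Let Λ₀ and Λ be full-rank ℤ-lattices in ℝ^d with Λ ⊆ Λ₀. Then θ(Λ) ≤ I(B_{Λ₀})^{−1} · I(ℝ^d ∖ B_Λ). -/

import Mathlib

/- Statement 10 (Lemma `L2`): for full-rank ℤ-lattices `Λ ⊆ Λ₀` in `ℝ^d`,
   `θ(Λ) ≤ I(B_{Λ₀})⁻¹ · I(ℝ^d ∖ B_Λ)`. -/

open MeasureTheory
open Set

namespace Stmt10

variable (d : ℕ) (l : Fin d → ℝ)



lemma aux_cont {c : ℝ} : Continuous (fun t : ℝ => (1 + |t|) ^ c) := by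
  apply Continuous.rpow_const (by continuity)
  intro t; left; positivity

lemma aux_int1d {c : ℝ} (hc : c < -1) : Integrable (fun t : ℝ => (1 + |t|) ^ c) := by
  have hcont : Continuous (fun t : ℝ => (1 + |t|) ^ c) := aux_cont
  have hIci : IntegrableOn (fun t : ℝ => (1 + |t|) ^ c) (Ici (0:ℝ)) := by
    have h1 : IntegrableOn (fun t : ℝ => (1 + |t|) ^ c) (Icc (0:ℝ) 1) :=
      hcont.continuousOn.integrableOn_compact isCompact_Icc
    have h2 : IntegrableOn (fun t : ℝ => (1 + |t|) ^ c) (Ioi (1:ℝ)) := by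
      have hb := integrableOn_Ioi_rpow_of_lt hc one_pos
      refine Integrable.mono hb hcont.aestronglyMeasurable.restrict ?_
      filter_upwards [ae_restrict_mem measurableSet_Ioi] with t ht
      have ht1 : (1:ℝ) < t := ht
      rw [Real.norm_eq_abs, Real.norm_eq_abs, abs_of_nonneg (by positivity),
        abs_of_nonneg (Real.rpow_nonneg (by linarith) _)]
      exact Real.rpow_le_rpow_of_nonpos (by linarith)
        (by rw [abs_of_nonneg (by linarith)]; linarith) (by linarith)
    have hset : Ici (0:ℝ) = Icc 0 1 ∪ Ioi 1 := by
      ext t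
      simp only [mem_Ici, mem_union, mem_Icc, mem_Ioi]
      constructor
      · intro h; rcases le_or_gt t 1 with h1 | h1
        · exact Or.inl ⟨h, h1⟩
        · exact Or.inr h1
      · rintro (⟨h, _⟩ | h) <;> linarith
    rw [hset]; exact h1.union h2
  have hIic : IntegrableOn (fun t : ℝ => (1 + |t|) ^ c) (Iic (0:ℝ)) := by
    rw [show Iic (0:ℝ) = (fun x : ℝ => -x) ⁻¹' (Ici (0:ℝ)) by ext t; simp]
    rw [show (fun t : ℝ => (1 + |t|) ^ c) = ((fun t : ℝ => (1 + |t|) ^ c) ∘ Neg.neg) by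
      ext t; simp [Function.comp]]
    rw [show ((fun x : ℝ => -x) ⁻¹' (Ici (0:ℝ))) = (Neg.neg ⁻¹' (Ici (0:ℝ))) from rfl]
    rw [(Measure.measurePreserving_neg (volume : Measure ℝ)).integrableOn_comp_preimage
      (Homeomorph.neg ℝ).measurableEmbedding]
    exact hIci
  rw [← integrableOn_univ, show (univ : Set ℝ) = Iic 0 ∪ Ici 0 by
    ext t; simp [le_total t 0, le_total 0 t]]
  exact hIic.union hIci

/-- `f(x) = ∏_{j=1}^d (1+|x_j|)^{−l_j/2}`. -/
noncomputable def f (x : EuclideanSpace ℝ (Fin d)) : ℝ :=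
  ∏ j, (1 + |x j|) ^ (-(l j) / 2)

/-- `θ(Λ) = Σ_{b ∈ Λ∖{0}} f(b)`. -/
noncomputable def theta (L : Submodule ℤ (EuclideanSpace ℝ (Fin d))) : ℝ :=
  ∑' b : {x : EuclideanSpace ℝ (Fin d) // x ∈ L ∧ x ≠ 0}, f d l b

/-- `r(Λ) = (1/2)·min{‖b‖ : b ∈ Λ∖{0}}`. -/
noncomputable def rlat (L : Submodule ℤ (EuclideanSpace ℝ (Fin d))) : ℝ :=
  (1 / 2) * sInf {t : ℝ | ∃ b ∈ L, b ≠ 0 ∧ ‖b‖ = t}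

/-- `B_Λ = {x ∈ ℝ^d : ‖x‖ ≤ r(Λ)}`. -/
noncomputable def ball (L : Submodule ℤ (EuclideanSpace ℝ (Fin d))) :
    Set (EuclideanSpace ℝ (Fin d)) :=
  {x | ‖x‖ ≤ rlat d L}

/-- `I(D) = ∫_D f(x) dx`. -/
noncomputable def Iof (D : Set (EuclideanSpace ℝ (Fin d))) : ℝ :=
  ∫ x in D, f d l x

lemma f_pos (x : EuclideanSpace ℝ (Fin d)) : 0 < f d l x := by
  apply Finset.prod_pos
  intro j _
  positivity


lemma f_cont : Continuous (f d l) := by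
  apply continuous_finset_prod
  intro j _
  apply Continuous.rpow_const
  · exact (continuous_const.add ((continuous_apply j).comp
      (PiLp.continuous_ofLp 2 (fun _ : Fin d => ℝ))).abs)
  · intro x; left; positivity


lemma f_integrable (hl4 : ∀ j, 4 ≤ l j) : Integrable (f d l) := by
  have key : Integrable (fun x : Fin d → ℝ => ∏ j, (1 + |x j|) ^ (-(l j)/2)) :=
    Integrable.fintype_prod (f := fun j t => (1 + |t|) ^ (-(l j)/2))
      (fun j => aux_int1d (by have := hl4 j; linarith))
  have hm := EuclideanSpace.volume_preserving_symm_measurableEquiv_toLp (Fin d)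
  have h2 := (hm.integrable_comp_emb (MeasurableEquiv.measurableEmbedding _)).mpr key
  exact h2


lemma f_submul (hl4 : ∀ j, 4 ≤ l j) (x y : EuclideanSpace ℝ (Fin d)) :
    f d l x * f d l y ≤ f d l (x + y) := by
  unfold f
  rw [← Finset.prod_mul_distrib]
  apply Finset.prod_le_prod
  · intro j _; positivity
  · intro j _
    have hxy : (x + y) j = x j + y j := rfl
    rw [hxy, ← Real.mul_rpow (by positivity) (by positivity)]
    apply Real.rpow_le_rpow_of_nonpos
    · positivity
    · nlinarith [abs_add_le (x j) (y j), abs_nonneg (x j), abs_nonneg (y j),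
        abs_nonneg (x j + y j)]
    · have := hl4 j; linarith


theorem statement10 (hd : 1 ≤ d) (hl4 : ∀ j, 4 ≤ l j) (hmono : Monotone l)
    (Λ Λ₀ : Submodule ℤ (EuclideanSpace ℝ (Fin d)))
    (hΛdisc : DiscreteTopology Λ)
    (hΛspan : Submodule.span ℝ (Λ : Set (EuclideanSpace ℝ (Fin d))) = ⊤)
    (hΛ₀disc : DiscreteTopology Λ₀)
    (hΛ₀span : Submodule.span ℝ (Λ₀ : Set (EuclideanSpace ℝ (Fin d))) = ⊤)
    (hsub : Λ ≤ Λ₀) :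
    theta d l Λ ≤ (Iof d l (ball d Λ₀))⁻¹ * Iof d l ((Set.univ : Set (EuclideanSpace ℝ (Fin d))) \ ball d Λ) := by
  classical
  have hfi := f_integrable d l hl4
  have hne : Nonempty (Fin d) := ⟨⟨0, hd⟩⟩
  have hnt : Nontrivial (EuclideanSpace ℝ (Fin d)) := by
    refine ⟨EuclideanSpace.single ⟨0, hd⟩ (1:ℝ), 0, fun h => ?_⟩
    have := congrArg (fun w => w ⟨0, hd⟩) h
    simp [EuclideanSpace.single_apply] at this
  -- nonzero element of Λ
  obtain ⟨v, hvΛ, hv0⟩ : ∃ v ∈ Λ, v ≠ 0 := by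
    by_contra h
    push_neg at h
    have hspan : Submodule.span ℝ (Λ : Set (EuclideanSpace ℝ (Fin d))) ≤ ⊥ :=
      Submodule.span_le.2 (by intro x hx; simpa using h x hx)
    rw [hΛspan] at hspan
    obtain ⟨a, b, hab⟩ := hnt
    exact hab (by
      have ha : a ∈ (⊥ : Submodule ℝ (EuclideanSpace ℝ (Fin d))) := hspan trivial
      have hb : b ∈ (⊥ : Submodule ℝ (EuclideanSpace ℝ (Fin d))) := hspan trivial
      rw [Submodule.mem_bot] at ha hb; rw [ha, hb])
  -- discreteness : ε
  obtain ⟨ε, hε, hεbd⟩ : ∃ ε > 0, ∀ b ∈ Λ₀, ‖b‖ < ε → b = 0 := by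
    have h1 : IsOpen ({0} : Set Λ₀) := isOpen_discrete _
    rw [Metric.isOpen_iff] at h1
    obtain ⟨ε, hε, hb⟩ := h1 0 rfl
    refine ⟨ε, hε, fun b hbmem hnorm => ?_⟩
    have hmem : (⟨b, hbmem⟩ : Λ₀) ∈ Metric.ball (0 : Λ₀) ε := by
      rw [Metric.mem_ball, Subtype.dist_eq]
      simpa [dist_zero_right] using hnorm
    have := hb hmem
    simpa [Subtype.ext_iff] using this
  set A : Set ℝ := {t : ℝ | ∃ b ∈ Λ, b ≠ 0 ∧ ‖b‖ = t} with hA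
  set A₀ : Set ℝ := {t : ℝ | ∃ b ∈ Λ₀, b ≠ 0 ∧ ‖b‖ = t} with hA₀
  have hAne : A.Nonempty := ⟨‖v‖, v, hvΛ, hv0, rfl⟩
  have hA₀ne : A₀.Nonempty := ⟨‖v‖, v, hsub hvΛ, hv0, rfl⟩
  have hA₀lb : ∀ t ∈ A₀, ε ≤ t := by
    rintro t ⟨b, hb, hb0, rfl⟩
    by_contra hlt
    push_neg at hlt
    exact hb0 (hεbd b hb hlt)
  have hA₀bdd : BddBelow A₀ := ⟨ε, hA₀lb⟩
  have hAsub : A ⊆ A₀ := by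
    rintro t ⟨b, hb, hb0, rfl⟩; exact ⟨b, hsub hb, hb0, rfl⟩
  have hAbdd : BddBelow A := hA₀bdd.mono hAsub
  set r₀ : ℝ := rlat d Λ₀ with hr₀
  set r : ℝ := rlat d Λ with hrdef
  have hr₀pos : 0 < r₀ := by
    rw [hr₀, rlat]
    have : ε ≤ sInf A₀ := le_csInf hA₀ne hA₀lb
    linarith
  have hr₀r : r₀ ≤ r := by
    rw [hr₀, hrdef, rlat, rlat]
    have : sInf A₀ ≤ sInf A := csInf_le_csInf hA₀bdd hAne hAsub
    linarith
  have hrpos : 0 < r := lt_of_lt_of_le hr₀pos hr₀r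
  have hsep₀ : ∀ b ∈ Λ₀, b ≠ 0 → 2 * r₀ ≤ ‖b‖ := by
    intro b hb hb0
    have : sInf A₀ ≤ ‖b‖ := csInf_le hA₀bdd ⟨b, hb, hb0, rfl⟩
    rw [hr₀, rlat]; linarith
  have hsepΛ : ∀ b ∈ Λ, b ≠ 0 → 2 * r ≤ ‖b‖ := by
    intro b hb hb0
    have : sInf A ≤ ‖b‖ := csInf_le hAbdd ⟨b, hb, hb0, rfl⟩
    rw [hrdef, rlat]; linarith
  have hball₀ : ball d Λ₀ = Metric.closedBall 0 r₀ := by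
    ext x; simp [ball, Metric.mem_closedBall, dist_zero_right, hr₀]
  have hballΛ : ball d Λ = Metric.closedBall 0 r := by
    ext x; simp [ball, Metric.mem_closedBall, dist_zero_right, hrdef]
  -- positivity of I₀
  have hI₀pos : 0 < Iof d l (ball d Λ₀) := by
    rw [Iof, hball₀, setIntegral_pos_iff_support_of_nonneg_ae
      (Filter.Eventually.of_forall fun x => (f_pos d l x).le) hfi.integrableOn]
    refine lt_of_lt_of_le (Metric.measure_ball_pos volume (0 : EuclideanSpace ℝ (Fin d)) hr₀pos) (measure_mono ?_)
    intro x hx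
    exact ⟨(f_pos d l x).ne', Metric.ball_subset_closedBall hx⟩
  have hI₀nonneg : 0 ≤ Iof d l (ball d Λ₀) := hI₀pos.le
  -- key pointwise bound
  have hkey : ∀ b : EuclideanSpace ℝ (Fin d),
      f d l b * Iof d l (ball d Λ₀) ≤ ∫ x in Metric.closedBall b r₀, f d l x := by
    intro b
    have htrans : ∫ x in Metric.closedBall b r₀, f d l x
        = ∫ y in Metric.closedBall 0 r₀, f d l (y + b) := by
      have hmp := measurePreserving_add_right (volume : Measure (EuclideanSpace ℝ (Fin d))) b
      have hemb : MeasurableEmbedding (fun y : EuclideanSpace ℝ (Fin d) => y + b) :=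
        (MeasurableEquiv.addRight b).measurableEmbedding
      have := hmp.setIntegral_preimage_emb hemb (f d l) (Metric.closedBall b r₀)
      rw [← this]
      congr 1
      ext y
      simp [Metric.mem_closedBall, dist_eq_norm]
    rw [htrans]
    have hint1 : IntegrableOn (fun y => f d l y * f d l b) (Metric.closedBall 0 r₀) volume :=
      (hfi.mul_const _).integrableOn
    have hint2 : IntegrableOn (fun y => f d l (y + b)) (Metric.closedBall 0 r₀) volume :=
      (hfi.comp_add_right b).integrableOn
    calc f d l b * Iof d l (ball d Λ₀)
        = ∫ y in Metric.closedBall 0 r₀, f d l y * f d l b := by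
          rw [integral_mul_const, Iof, hball₀, mul_comm]
      _ ≤ ∫ y in Metric.closedBall 0 r₀, f d l (y + b) := by
          refine setIntegral_mono hint1 hint2 fun y => ?_
          exact f_submul d l hl4 y b
  -- the disjoint sets
  set T : {x : EuclideanSpace ℝ (Fin d) // x ∈ Λ ∧ x ≠ 0} → Set (EuclideanSpace ℝ (Fin d)) :=
    fun b => Metric.closedBall b.1 r₀ \ (Metric.sphere 0 r ∪ Metric.sphere b.1 r₀) with hT
  have hTmeas : ∀ b, MeasurableSet (T b) := fun b =>
    Metric.isClosed_closedBall.measurableSet.diff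
      (Metric.isClosed_sphere.measurableSet.union Metric.isClosed_sphere.measurableSet)
  have hTsub : ∀ b, T b ⊆ (Set.univ : Set (EuclideanSpace ℝ (Fin d))) \ ball d Λ := by
    rintro b x ⟨hx1, hx2⟩
    simp only [mem_union, Metric.mem_sphere, not_or] at hx2
    refine ⟨trivial, ?_⟩
    intro hxB
    rw [hballΛ, Metric.mem_closedBall, dist_zero_right] at hxB
    have h2r : 2 * r ≤ ‖b.1‖ := hsepΛ b.1 b.2.1 b.2.2
    have hxb : ‖x - b.1‖ ≤ r₀ := by
      rw [Metric.mem_closedBall, dist_eq_norm] at hx1; exact hx1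
    have htri : ‖b.1‖ ≤ ‖x‖ + ‖x - b.1‖ := by
      have := norm_sub_le x (x - b.1)
      simpa using this
    have hxr : ‖x‖ ≠ r := by
      intro h; exact hx2.1 (by rw [dist_zero_right]; exact h)
    have : r ≤ ‖x‖ := by linarith
    exact hxr (le_antisymm hxB this)
  have hTdisj : Pairwise (Function.onFun Disjoint T) := by
    intro b b' hbb'
    rw [Function.onFun, Set.disjoint_left]
    rintro x ⟨hx1, hx2⟩ ⟨hx1', hx2'⟩
    simp only [mem_union, Metric.mem_sphere, not_or] at hx2 hx2'
    have hne0 : b.1 - b'.1 ≠ 0 := sub_ne_zero.2 (fun h => hbb' (Subtype.ext h))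
    have hmem : b.1 - b'.1 ∈ Λ₀ := Submodule.sub_mem _ (hsub b.2.1) (hsub b'.2.1)
    have hsepbb : 2 * r₀ ≤ ‖b.1 - b'.1‖ := hsep₀ _ hmem hne0
    rw [Metric.mem_closedBall] at hx1 hx1'
    have htri : ‖b.1 - b'.1‖ ≤ dist x b.1 + dist x b'.1 := by
      rw [dist_eq_norm, dist_eq_norm]
      have := norm_sub_le_norm_sub_add_norm_sub b.1 x b'.1
      calc ‖b.1 - b'.1‖ ≤ ‖b.1 - x‖ + ‖x - b'.1‖ := by
            simpa using norm_sub_le_norm_sub_add_norm_sub b.1 x b'.1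
        _ = ‖x - b.1‖ + ‖x - b'.1‖ := by rw [norm_sub_rev]
    have : dist x b.1 = r₀ := le_antisymm hx1 (by linarith)
    exact hx2.2 this
  have hTeq : ∀ b, ∫ x in T b, f d l x = ∫ x in Metric.closedBall b.1 r₀, f d l x := by
    intro b
    apply setIntegral_congr_set
    rw [ae_eq_set]
    constructor
    · exact measure_mono_null (fun x hx => (hx.2 hx.1.1).elim) measure_empty
    · refine measure_mono_null (fun x hx => ?_) (measure_union_null
        (Measure.addHaar_sphere volume 0 r) (Measure.addHaar_sphere volume b.1 r₀))
      rcases hx with ⟨hx1, hx2⟩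
      by_contra hmem
      exact hx2 ⟨hx1, hmem⟩
  -- finite sums
  have hfinsum : ∀ F : Finset {x : EuclideanSpace ℝ (Fin d) // x ∈ Λ ∧ x ≠ 0},
      (∑ b ∈ F, f d l b.1) ≤ (Iof d l (ball d Λ₀))⁻¹ *
        Iof d l ((Set.univ : Set (EuclideanSpace ℝ (Fin d))) \ ball d Λ) := by
    intro F
    have hstep : (∑ b ∈ F, f d l b.1) * Iof d l (ball d Λ₀) ≤
        Iof d l ((Set.univ : Set (EuclideanSpace ℝ (Fin d))) \ ball d Λ) := by
      calc (∑ b ∈ F, f d l b.1) * Iof d l (ball d Λ₀)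
          = ∑ b ∈ F, f d l b.1 * Iof d l (ball d Λ₀) := Finset.sum_mul _ _ _
        _ ≤ ∑ b ∈ F, ∫ x in T b, f d l x := by
            refine Finset.sum_le_sum fun b _ => ?_
            rw [hTeq b]; exact hkey b.1
        _ = ∫ x in ⋃ b ∈ F, T b, f d l x := by
            exact (integral_biUnion_finset F (fun b _ => hTmeas b)
              (hTdisj.set_pairwise _) (fun b _ => hfi.integrableOn)).symm
        _ ≤ Iof d l ((Set.univ : Set (EuclideanSpace ℝ (Fin d))) \ ball d Λ) := by
            rw [Iof]
            refine setIntegral_mono_set hfi.integrableOn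
              (Filter.Eventually.of_forall fun x => (f_pos d l x).le)
              (HasSubset.Subset.eventuallyLE ?_)
            exact Set.iUnion₂_subset fun b _ => hTsub b
    rw [← mul_le_mul_iff_left₀ hI₀pos, mul_comm ((Iof d l (ball d Λ₀))⁻¹) _, mul_assoc,
      inv_mul_cancel₀ (ne_of_gt hI₀pos), mul_one]
    exact hstep
  -- conclude
  by_cases hsum : Summable (fun b : {x : EuclideanSpace ℝ (Fin d) // x ∈ Λ ∧ x ≠ 0} => f d l b.1)
  · exact Summable.tsum_le_of_sum_le hsum hfinsum
  · rw [theta, tsum_eq_zero_of_not_summable hsum]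
    refine mul_nonneg (inv_nonneg.2 hI₀nonneg) ?_
    rw [Iof]
    refine setIntegral_nonneg ?_ fun x _ => (f_pos d l x).le
    refine MeasurableSet.univ.diff ?_
    rw [hballΛ]
    exact Metric.isClosed_closedBall.measurableSet

end Stmt10
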